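/- arXiv:2307.13097 — 5 statements merged into one kernel-verified Lean document; each statement's English description precedes it below -/
import Mathlib

section
/- Let A and B be positive definite n×n complex matrices and let 0 ≤ p ≤ 1. Then Tr(A^p B^{1−p}) ≤ p · Tr(A) + (1−p) · Tr(B), where the trace of the product of the two positive definite matrices A^p and B^{1−p} is a real number. -/
open Matrix ComplexOrder

/-- Functional calculus for Hermitian complex matrices: apply `f` to the eigenvalues.
(For non-Hermitian input we return `0`; all matrices considered below are Hermitian.) -/
noncomputable def mfun {n : ℕ} (f : ℝ → ℝ) (A : Matrix (Fin n) (Fin n) ℂ) :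
    Matrix (Fin n) (Fin n) ℂ :=
  if hA : A.IsHermitian then
    (hA.eigenvectorUnitary : Matrix (Fin n) (Fin n) ℂ) *
      Matrix.diagonal (fun i => (f (hA.eigenvalues i) : ℂ)) *
      (hA.eigenvectorUnitary : Matrix (Fin n) (Fin n) ℂ)ᴴ
  else 0

/-- Real matrix power `A^r` of a Hermitian matrix, via functional calculus
(`t ↦ t ^ r` is the real power, with the convention `0 ^ r = 0` for `r ≠ 0`). -/
noncomputable def mpow {n : ℕ} (A : Matrix (Fin n) (Fin n) ℂ) (r : ℝ) :
    Matrix (Fin n) (Fin n) ℂ :=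
  mfun (fun t => t ^ r) A


/-- Auxiliary: trace of a product of two conjugated diagonals. -/
lemma trace_conj_diag_mul_conj_diag {n : ℕ} (U V : Matrix (Fin n) (Fin n) ℂ)
    (d e : Fin n → ℂ) :
    (U * Matrix.diagonal d * Uᴴ * (V * Matrix.diagonal e * Vᴴ)).trace
      = ∑ i, ∑ j, d i * e j * ((Uᴴ * V) i j * star ((Uᴴ * V) i j)) := by
  have h0 : U * Matrix.diagonal d * Uᴴ * (V * Matrix.diagonal e * Vᴴ)
      = U * (Matrix.diagonal d * (Uᴴ * V) * Matrix.diagonal e * Vᴴ) := by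
    simp only [Matrix.mul_assoc]
  rw [h0, Matrix.trace_mul_comm]
  have h1 : Matrix.diagonal d * (Uᴴ * V) * Matrix.diagonal e * Vᴴ * U
      = Matrix.diagonal d * (Uᴴ * V) * Matrix.diagonal e * (Uᴴ * V)ᴴ := by
    simp only [Matrix.conjTranspose_mul, Matrix.conjTranspose_conjTranspose, Matrix.mul_assoc]
  rw [h1]
  set W := Uᴴ * V with hW
  rw [Matrix.trace]
  refine Finset.sum_congr rfl fun i _ => ?_
  rw [Matrix.diag_apply, Matrix.mul_apply]
  refine Finset.sum_congr rfl fun j _ => ?_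
  rw [Matrix.mul_diagonal, Matrix.diagonal_mul, Matrix.conjTranspose_apply]
  ring

/-- Tracial Young inequality, `0 ≤ p ≤ 1`: for positive definite complex matrices
`A`, `B` one has `Tr(A^p B^(1-p)) ≤ p Tr A + (1-p) Tr B` (an inequality of complex
numbers in the complex order, so in particular both sides are real). -/
theorem trace_young_le {n : ℕ} (A B : Matrix (Fin n) (Fin n) ℂ)
    (hA : A.PosDef) (hB : B.PosDef) (p : ℝ) (hp0 : 0 ≤ p) (hp1 : p ≤ 1) :
    (mpow A p * mpow B (1 - p)).trace ≤
      (p : ℂ) * A.trace + ((1 : ℂ) - (p : ℂ)) * B.trace := by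
  classical
  have hA' := hA.isHermitian
  have hB' := hB.isHermitian
  set U : Matrix (Fin n) (Fin n) ℂ := (hA'.eigenvectorUnitary : Matrix (Fin n) (Fin n) ℂ) with hU
  set V : Matrix (Fin n) (Fin n) ℂ := (hB'.eigenvectorUnitary : Matrix (Fin n) (Fin n) ℂ) with hV
  set a := hA'.eigenvalues with ha
  set b := hB'.eigenvalues with hb
  set W : Matrix (Fin n) (Fin n) ℂ := Uᴴ * V with hW
  -- unitarity facts
  have hUsU : Uᴴ * U = 1 := by
    rw [hU, ← star_eq_conjTranspose]; exact Unitary.coe_star_mul_self _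
  have hUUs : U * Uᴴ = 1 := by
    rw [hU, ← star_eq_conjTranspose]; exact Unitary.coe_mul_star_self _
  have hVsV : Vᴴ * V = 1 := by
    rw [hV, ← star_eq_conjTranspose]; exact Unitary.coe_star_mul_self _
  have hVVs : V * Vᴴ = 1 := by
    rw [hV, ← star_eq_conjTranspose]; exact Unitary.coe_mul_star_self _
  -- row and column sums of |W i j|^2
  have hWWs : W * Wᴴ = 1 := by
    rw [hW, conjTranspose_mul, conjTranspose_conjTranspose, mul_assoc, ← mul_assoc V,
      hVVs, one_mul, hUsU]
  have hWsW : Wᴴ * W = 1 := by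
    rw [hW, conjTranspose_mul, conjTranspose_conjTranspose, mul_assoc, ← mul_assoc U,
      hUUs, one_mul, hVsV]
  have hrow : ∀ i, ∑ j, Complex.normSq (W i j) = 1 := by
    intro i
    have h2 : ∑ j, W i j * star (W i j) = 1 := by
      simpa [Matrix.mul_apply, Matrix.conjTranspose_apply] using congrFun (congrFun hWWs i) i
    have h3 : ((∑ j, Complex.normSq (W i j) : ℝ) : ℂ) = ((1 : ℝ) : ℂ) := by
      push_cast
      rw [← h2]
      exact Finset.sum_congr rfl fun j _ => by
        rw [Complex.star_def, Complex.mul_conj]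
    exact_mod_cast h3
  have hcol : ∀ j, ∑ i, Complex.normSq (W i j) = 1 := by
    intro j
    have h2 : ∑ i, star (W i j) * W i j = 1 := by
      simpa [Matrix.mul_apply, Matrix.conjTranspose_apply] using congrFun (congrFun hWsW j) j
    have h3 : ((∑ i, Complex.normSq (W i j) : ℝ) : ℂ) = ((1 : ℝ) : ℂ) := by
      push_cast
      rw [← h2]
      exact Finset.sum_congr rfl fun i _ => by
        rw [Complex.star_def, mul_comm, Complex.mul_conj]
    exact_mod_cast h3
  -- traces of A and B as sums of eigenvalues
  have hAtr : A.trace = ((∑ i, a i : ℝ) : ℂ) := by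
    conv_lhs => rw [hA'.spectral_theorem]
    rw [Unitary.conjStarAlgAut_apply, trace_mul_cycle, Unitary.coe_star_mul_self, one_mul, trace_diagonal]
    push_cast
    rfl
  have hBtr : B.trace = ((∑ i, b i : ℝ) : ℂ) := by
    conv_lhs => rw [hB'.spectral_theorem]
    rw [Unitary.conjStarAlgAut_apply, trace_mul_cycle, Unitary.coe_star_mul_self, one_mul, trace_diagonal]
    push_cast
    rfl
  -- trace of the matrix product as a real sum
  have hLHS : (mpow A p * mpow B (1 - p)).trace
      = ((∑ i, ∑ j, a i ^ p * b j ^ (1 - p) * Complex.normSq (W i j) : ℝ) : ℂ) := by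
    rw [mpow, mpow, mfun, mfun, dif_pos hA', dif_pos hB',
      trace_conj_diag_mul_conj_diag]
    push_cast
    refine Finset.sum_congr rfl fun i _ => Finset.sum_congr rfl fun j _ => ?_
    rw [Complex.star_def, Complex.mul_conj]
  -- the real inequality
  have key : ∑ i, ∑ j, a i ^ p * b j ^ (1 - p) * Complex.normSq (W i j)
      ≤ p * (∑ i, a i) + (1 - p) * (∑ j, b j) := by
    have young : ∀ i j, a i ^ p * b j ^ (1 - p) ≤ p * a i + (1 - p) * b j := fun i j =>
      Real.geom_mean_le_arith_mean2_weighted hp0 (by linarith)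
        (hA.eigenvalues_pos i).le (hB.eigenvalues_pos j).le (by ring)
    calc ∑ i, ∑ j, a i ^ p * b j ^ (1 - p) * Complex.normSq (W i j)
        ≤ ∑ i, ∑ j, (p * a i + (1 - p) * b j) * Complex.normSq (W i j) :=
          Finset.sum_le_sum fun i _ => Finset.sum_le_sum fun j _ =>
            mul_le_mul_of_nonneg_right (young i j) (Complex.normSq_nonneg _)
      _ = (∑ i, ∑ j, p * a i * Complex.normSq (W i j))
            + ∑ i, ∑ j, (1 - p) * b j * Complex.normSq (W i j) := by
          simp_rw [add_mul]
          rw [← Finset.sum_add_distrib]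
          exact Finset.sum_congr rfl fun i _ => Finset.sum_add_distrib
      _ = p * (∑ i, a i) + (1 - p) * (∑ j, b j) := by
          congr 1
          · calc ∑ i, ∑ j, p * a i * Complex.normSq (W i j)
                = ∑ i, p * a i := Finset.sum_congr rfl fun i _ => by
                  rw [← Finset.mul_sum, hrow i, mul_one]
              _ = p * ∑ i, a i := by rw [Finset.mul_sum]
          · rw [Finset.sum_comm]
            calc ∑ j, ∑ i, (1 - p) * b j * Complex.normSq (W i j)
                = ∑ j, (1 - p) * b j := Finset.sum_congr rfl fun j _ => by
                  rw [← Finset.mul_sum, hcol j, mul_one]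
              _ = (1 - p) * ∑ j, b j := by rw [Finset.mul_sum]
  rw [hLHS, hAtr, hBtr]
  have hRHS : ((p * (∑ i, a i) + (1 - p) * (∑ j, b j) : ℝ) : ℂ)
      = (p : ℂ) * ((∑ i, a i : ℝ) : ℂ) + ((1 : ℂ) - (p : ℂ)) * ((∑ i, b i : ℝ) : ℂ) := by
    push_cast
    ring
  rw [← hRHS]
  exact_mod_cast key
end

section
/- Let A and B be positive definite n×n complex matrices and let p be a real number with p ≤ 0 or p ≥ 1. Then Tr(A^p B^{1−p}) ≥ p · Tr(A) + (1−p) · Tr(B), where the trace of the product of the two positive definite matrices A^p and B^{1−p} is a real number. -/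
open Matrix ComplexOrder

lemma scalar_young_aux {a b p : ℝ} (ha : 0 < a) (hb : 0 < b) (hp : 1 ≤ p) :
    p * a + (1 - p) * b ≤ a ^ p * b ^ (1 - p) := by
  have hs : -1 ≤ a / b - 1 := by
    have : 0 < a / b := div_pos ha hb
    linarith
  have h := one_add_mul_self_le_rpow_one_add hs hp
  rw [add_sub_cancel] at h
  have h2 : b * (1 + p * (a / b - 1)) ≤ b * (a / b) ^ p :=
    mul_le_mul_of_nonneg_left h hb.le
  calc p * a + (1 - p) * b = b * (1 + p * (a / b - 1)) := by field_simp; ring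
    _ ≤ b * (a / b) ^ p := h2
    _ = a ^ p * b ^ (1 - p) := by
        rw [Real.div_rpow ha.le hb.le, Real.rpow_sub hb, Real.rpow_one]
        field_simp

lemma scalar_young {a b p : ℝ} (ha : 0 < a) (hb : 0 < b) (hp : p ≤ 0 ∨ 1 ≤ p) :
    p * a + (1 - p) * b ≤ a ^ p * b ^ (1 - p) := by
  rcases hp with hp | hp
  · have h := scalar_young_aux hb ha (p := 1 - p) (by linarith)
    have e : (1 : ℝ) - (1 - p) = p := by ring
    rw [e] at h
    have : b ^ (1 - p) * a ^ p = a ^ p * b ^ (1 - p) := by ring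
    linarith [h, this ▸ h]
  · exact scalar_young_aux ha hb hp

/-- trace of `U D Uᴴ` for unitary `U` is the trace of `D`. -/
lemma trace_conj_unitary {n : ℕ} (U : Matrix.unitaryGroup (Fin n) ℂ)
    (D : Matrix (Fin n) (Fin n) ℂ) :
    ((U : Matrix (Fin n) (Fin n) ℂ) * D * star (U : Matrix (Fin n) (Fin n) ℂ)).trace
      = D.trace := by
  rw [Matrix.trace_mul_cycle, Unitary.star_mul_self_of_mem U.prop, Matrix.one_mul]

lemma trace_eq_sum_eig {n : ℕ} {A : Matrix (Fin n) (Fin n) ℂ} (hA : A.IsHermitian) :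
    A.trace = ∑ i, (hA.eigenvalues i : ℂ) := by
  conv_lhs => rw [hA.spectral_theorem]
  rw [Unitary.conjStarAlgAut_apply]
  rw [trace_conj_unitary, Matrix.trace_diagonal]
  simp [Function.comp]


/-- Reversed tracial Young inequality, `p ≤ 0` or `p ≥ 1`: for positive definite
complex matrices `A`, `B` one has `Tr(A^p B^(1-p)) ≥ p Tr A + (1-p) Tr B` (an
inequality of complex numbers in the complex order, so both sides are real). -/
theorem trace_young_ge {n : ℕ} (A B : Matrix (Fin n) (Fin n) ℂ)
    (hA : A.PosDef) (hB : B.PosDef) (p : ℝ) (hp : p ≤ 0 ∨ 1 ≤ p) :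
    (p : ℂ) * A.trace + ((1 : ℂ) - (p : ℂ)) * B.trace ≤
      (mpow A p * mpow B (1 - p)).trace := by
  have hAh : A.IsHermitian := hA.1
  have hBh : B.IsHermitian := hB.1
  set U : Matrix (Fin n) (Fin n) ℂ := (hAh.eigenvectorUnitary : Matrix (Fin n) (Fin n) ℂ) with hUdef
  set V : Matrix (Fin n) (Fin n) ℂ := (hBh.eigenvectorUnitary : Matrix (Fin n) (Fin n) ℂ) with hVdef
  set a : Fin n → ℝ := hAh.eigenvalues with hadef
  set b : Fin n → ℝ := hBh.eigenvalues with hbdef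
  set W : Matrix (Fin n) (Fin n) ℂ := Uᴴ * V with hWdef
  have ha : ∀ i, 0 < a i := hA.eigenvalues_pos
  have hb : ∀ j, 0 < b j := hB.eigenvalues_pos
  set c : Fin n → Fin n → ℝ := fun i j => Complex.normSq (W i j) with hcdef
  have hc : ∀ i j, 0 ≤ c i j := fun i j => Complex.normSq_nonneg _
  -- unitarity facts
  have hUU : Uᴴ * U = 1 := by
    rw [← Matrix.star_eq_conjTranspose]
    exact Unitary.star_mul_self_of_mem hAh.eigenvectorUnitary.prop
  have hUU' : U * Uᴴ = 1 := by
    rw [← Matrix.star_eq_conjTranspose]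
    exact Unitary.mul_star_self_of_mem hAh.eigenvectorUnitary.prop
  have hVV : Vᴴ * V = 1 := by
    rw [← Matrix.star_eq_conjTranspose]
    exact Unitary.star_mul_self_of_mem hBh.eigenvectorUnitary.prop
  have hVV' : V * Vᴴ = 1 := by
    rw [← Matrix.star_eq_conjTranspose]
    exact Unitary.mul_star_self_of_mem hBh.eigenvectorUnitary.prop
  have hWW : Wᴴ * W = 1 := by
    rw [hWdef, Matrix.conjTranspose_mul, Matrix.conjTranspose_conjTranspose,
      Matrix.mul_assoc, ← Matrix.mul_assoc U, hUU', Matrix.one_mul, hVV]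
  have hWW' : W * Wᴴ = 1 := by
    rw [hWdef, Matrix.conjTranspose_mul, Matrix.conjTranspose_conjTranspose,
      Matrix.mul_assoc, ← Matrix.mul_assoc V, hVV', Matrix.one_mul, hUU]
  -- row and column sums of c
  have hrow : ∀ i, ∑ j, c i j = 1 := by
    intro i
    have h1 : (W * Wᴴ) i i = 1 := by rw [hWW']; simp
    rw [Matrix.mul_apply] at h1
    have h2 : ∀ j, W i j * Wᴴ j i = (c i j : ℂ) := by
      intro j
      rw [Matrix.conjTranspose_apply,
        show (star (W i j) : ℂ) = (starRingEnd ℂ) (W i j) from rfl, Complex.mul_conj]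
    rw [Finset.sum_congr rfl (fun j _ => h2 j)] at h1
    have := congrArg Complex.re h1
    simpa using this
  have hcol : ∀ j, ∑ i, c i j = 1 := by
    intro j
    have h1 : (Wᴴ * W) j j = 1 := by rw [hWW]; simp
    rw [Matrix.mul_apply] at h1
    have h2 : ∀ i, Wᴴ j i * W i j = (c i j : ℂ) := by
      intro i
      rw [Matrix.conjTranspose_apply, mul_comm,
        show (star (W i j) : ℂ) = (starRingEnd ℂ) (W i j) from rfl, Complex.mul_conj]
    rw [Finset.sum_congr rfl (fun i _ => h2 i)] at h1
    have := congrArg Complex.re h1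
    simpa using this
  -- traces of A and B
  have htrA : A.trace = ((∑ i, a i : ℝ) : ℂ) := by
    rw [trace_eq_sum_eig hAh]; push_cast; rfl
  have htrB : B.trace = ((∑ j, b j : ℝ) : ℂ) := by
    rw [trace_eq_sum_eig hBh]; push_cast; rfl
  -- trace of the product
  have hmA : mpow A p = U * Matrix.diagonal (fun i => ((a i ^ p : ℝ) : ℂ)) * Uᴴ := by
    simp only [mpow, mfun, dif_pos hAh]
    rfl
  have hmB : mpow B (1 - p) = V * Matrix.diagonal (fun j => ((b j ^ (1 - p) : ℝ) : ℂ)) * Vᴴ := by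
    simp only [mpow, mfun, dif_pos hBh]
    rfl
  set d : Fin n → ℝ := fun i => a i ^ p with hddef
  set e : Fin n → ℝ := fun j => b j ^ (1 - p) with hedef
  have htr : (mpow A p * mpow B (1 - p)).trace
      = ((∑ i, ∑ j, c i j * (d i * e j) : ℝ) : ℂ) := by
    rw [hmA, hmB]
    have hrearr : U * Matrix.diagonal (fun i => ((d i : ℝ) : ℂ)) * Uᴴ *
        (V * Matrix.diagonal (fun j => ((e j : ℝ) : ℂ)) * Vᴴ)
        = U * (Matrix.diagonal (fun i => ((d i : ℝ) : ℂ)) * W *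
            Matrix.diagonal (fun j => ((e j : ℝ) : ℂ)) * Wᴴ) * Uᴴ := by
      rw [hWdef, Matrix.conjTranspose_mul, Matrix.conjTranspose_conjTranspose]
      simp only [Matrix.mul_assoc]
      rw [hUU', Matrix.mul_one]
    rw [hrearr, Matrix.trace_mul_cycle, hUU, Matrix.one_mul, Matrix.trace]
    push_cast
    apply Finset.sum_congr rfl
    intro i _
    rw [Matrix.diag_apply, Matrix.mul_apply]
    apply Finset.sum_congr rfl
    intro j _
    rw [Matrix.mul_diagonal, Matrix.diagonal_mul, Matrix.conjTranspose_apply]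
    have h3 : W i j * (starRingEnd ℂ) (W i j) = ((c i j : ℝ) : ℂ) := by
      rw [Complex.mul_conj]
    calc (d i : ℂ) * W i j * (e j : ℂ) * star (W i j)
        = (W i j * (starRingEnd ℂ) (W i j)) * ((d i : ℂ) * (e j : ℂ)) := by
          rw [show (star (W i j) : ℂ) = (starRingEnd ℂ) (W i j) from rfl]; ring
      _ = ((c i j : ℝ) : ℂ) * ((d i : ℂ) * (e j : ℂ)) := by rw [h3]
  rw [htrA, htrB, htr]
  have key : p * (∑ i, a i) + (1 - p) * (∑ j, b j) ≤ ∑ i, ∑ j, c i j * (d i * e j) := by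
    have expand : p * (∑ i, a i) + (1 - p) * (∑ j, b j)
        = ∑ i, ∑ j, c i j * (p * a i + (1 - p) * b j) := by
      have h1 : ∑ i, ∑ j, c i j * (p * a i) = p * ∑ i, a i := by
        rw [Finset.mul_sum]
        apply Finset.sum_congr rfl
        intro i _
        rw [← Finset.sum_mul, hrow i]; ring
      have h2 : ∑ i, ∑ j, c i j * ((1 - p) * b j) = (1 - p) * ∑ j, b j := by
        rw [Finset.sum_comm, Finset.mul_sum]
        apply Finset.sum_congr rfl
        intro j _
        rw [← Finset.sum_mul, hcol j, one_mul]
      calc p * (∑ i, a i) + (1 - p) * (∑ j, b j)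
          = (∑ i, ∑ j, c i j * (p * a i)) + ∑ i, ∑ j, c i j * ((1 - p) * b j) := by
            rw [h1, h2]
        _ = ∑ i, ∑ j, c i j * (p * a i + (1 - p) * b j) := by
            rw [← Finset.sum_add_distrib]
            apply Finset.sum_congr rfl
            intro i _
            rw [← Finset.sum_add_distrib]
            apply Finset.sum_congr rfl
            intro j _
            ring
    rw [expand]
    apply Finset.sum_le_sum
    intro i _
    apply Finset.sum_le_sum
    intro j _
    exact mul_le_mul_of_nonneg_left (scalar_young (ha i) (hb j) hp) (hc i j)
  calc (p : ℂ) * ((∑ i, a i : ℝ) : ℂ) + ((1:ℂ) - (p:ℂ)) * ((∑ j, b j : ℝ) : ℂ)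
      = (((p * ∑ i, a i + (1 - p) * ∑ j, b j : ℝ)) : ℂ) := by push_cast; ring
    _ ≤ ((∑ i, ∑ j, c i j * (d i * e j) : ℝ) : ℂ) := by
        rw [Complex.real_le_real]; exact key
end

section
/- Let q ≤ 2 be a real number and let Y be a positive definite n×n complex matrix. Then Tr(Y) is the maximum, over all positive definite n×n complex matrices X, of the expression Tr(X) − Tr( X^{2−q} ( log_q(X) − log_q(Y) ) ); that is, for every positive definite X one has Tr(X) − Tr( X^{2−q}( log_q(X) − log_q(Y) ) ) ≤ Tr(Y), with equality when X = Y. -/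
open Matrix ComplexOrder

/-- The deformed (r-)logarithm: `log_r x = (x^(r-1) - 1)/(r-1)` for `r ≠ 1`,
and the natural logarithm for `r = 1`. -/
noncomputable def dlog (r x : ℝ) : ℝ :=
  if r = 1 then Real.log x else (x ^ (r - 1) - 1) / (r - 1)

/-- The matrix deformed logarithm of a Hermitian matrix, via functional calculus. -/
noncomputable def mlog {n : ℕ} (r : ℝ) (A : Matrix (Fin n) (Fin n) ℂ) :
    Matrix (Fin n) (Fin n) ℂ :=
  mfun (dlog r) A



section Helpers

open Complex

/-- `(t^r - 1)/r ≤ t - 1` for `t > 0`, `r ≤ 1`, `r ≠ 0`. -/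
lemma tpow_div_le {r : ℝ} (hr0 : r ≠ 0) (hr1 : r ≤ 1) {t : ℝ} (ht : 0 < t) :
    (t ^ r - 1) / r ≤ t - 1 := by
  rcases lt_or_gt_of_ne hr0 with hneg | hpos
  · rw [div_le_iff_of_neg hneg]
    have h1 : 1 + Real.log t * r ≤ t ^ r := by
      rw [Real.rpow_def_of_pos ht]
      have := Real.add_one_le_exp (Real.log t * r)
      linarith
    have h2 : Real.log t ≤ t - 1 := Real.log_le_sub_one_of_pos ht
    have h3 : (t - 1) * r ≤ Real.log t * r := mul_le_mul_of_nonpos_right h2 hneg.le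
    linarith
  · rw [div_le_iff₀ hpos]
    have h := rpow_one_add_le_one_add_mul_self (s := t - 1) (by linarith) hpos.le hr1
    have ht' : 1 + (t - 1) = t := by ring
    rw [ht'] at h
    nlinarith

/-- Key scalar inequality: `a^(2-q) * (log_q b - log_q a) ≤ b - a`. -/
lemma scalar_key (q : ℝ) (hq : q ≤ 2) {a b : ℝ} (ha : 0 < a) (hb : 0 < b) :
    a ^ (2 - q) * (dlog q b - dlog q a) ≤ b - a := by
  by_cases h1 : q = 1
  · subst h1
    have h2 : (2:ℝ) - 1 = 1 := by norm_num
    simp only [dlog, eq_self_iff_true, if_true, h2, Real.rpow_one]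
    have hlog := Real.log_le_sub_one_of_pos (div_pos hb ha)
    rw [Real.log_div hb.ne' ha.ne'] at hlog
    have hmul : a * (Real.log b - Real.log a) ≤ a * (b / a - 1) :=
      mul_le_mul_of_nonneg_left hlog ha.le
    have h3 : a * (b / a - 1) = b - a := by field_simp
    linarith
  · have hr0 : q - 1 ≠ 0 := sub_ne_zero.mpr h1
    simp only [dlog, if_neg h1]
    set r : ℝ := q - 1 with hrdef
    have hda : (0:ℝ) < a ^ r := Real.rpow_pos_of_pos ha r
    have hpw : a ^ (2 - q) * a ^ r = a := by
      rw [← Real.rpow_add ha]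
      norm_num [hrdef]
    have hdiv : (b / a) ^ r = b ^ r / a ^ r := Real.div_rpow hb.le ha.le r
    have key := tpow_div_le hr0 (by rw [hrdef]; linarith) (div_pos hb ha)
    rw [hdiv] at key
    have key2 := mul_le_mul_of_nonneg_left key ha.le
    have h2q : (0:ℝ) < a ^ (2 - q) := Real.rpow_pos_of_pos ha _
    have heq : a ^ (2 - q) * ((b ^ r - 1) / r - (a ^ r - 1) / r)
        = a * ((b ^ r / a ^ r - 1) / r) := by
      field_simp
      linear_combination (b ^ r - a ^ r) * hpw
    have h3 : a * (b / a - 1) = b - a := by field_simp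
    rw [heq]
    linarith

/-- Conjugation by a matrix with `uᴴ * u = 1` preserves the trace. -/
lemma trace_conj {n : ℕ} {u : Matrix (Fin n) (Fin n) ℂ} (hu1 : uᴴ * u = 1)
    (D : Matrix (Fin n) (Fin n) ℂ) : (u * D * uᴴ).trace = D.trace := by
  rw [Matrix.trace_mul_cycle, hu1, Matrix.one_mul]

lemma trace_conj_mul_conj_same {n : ℕ} {u : Matrix (Fin n) (Fin n) ℂ}
    (hu1 : uᴴ * u = 1) (d e : Fin n → ℂ) :
    (u * Matrix.diagonal d * uᴴ * (u * Matrix.diagonal e * uᴴ)).trace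
      = ∑ i, d i * e i := by
  have hkey : u * Matrix.diagonal d * uᴴ * (u * Matrix.diagonal e * uᴴ)
      = u * (Matrix.diagonal d * Matrix.diagonal e) * uᴴ := by
    simp only [← Matrix.mul_assoc]
    rw [Matrix.mul_assoc (u * Matrix.diagonal d) uᴴ u, hu1, Matrix.mul_one,
      Matrix.mul_assoc u (Matrix.diagonal d) (Matrix.diagonal e)]
  rw [hkey, trace_conj hu1, Matrix.diagonal_mul_diagonal, Matrix.trace_diagonal]

lemma trace_conj_mul_conj {n : ℕ} {u v : Matrix (Fin n) (Fin n) ℂ}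
    (hu2 : u * uᴴ = 1) (hu1 : uᴴ * u = 1) (d e : Fin n → ℂ) :
    (u * Matrix.diagonal d * uᴴ * (v * Matrix.diagonal e * vᴴ)).trace
      = ∑ i, ∑ j, d i * e j * ((uᴴ * v) i j * star ((uᴴ * v) i j)) := by
  have hkey : u * Matrix.diagonal d * uᴴ * (v * Matrix.diagonal e * vᴴ)
      = u * (Matrix.diagonal d * ((uᴴ * v) * Matrix.diagonal e * (uᴴ * v)ᴴ)) * uᴴ := by
    rw [Matrix.conjTranspose_mul, Matrix.conjTranspose_conjTranspose]
    simp only [← Matrix.mul_assoc]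
    rw [Matrix.mul_assoc _ u uᴴ, hu2, Matrix.mul_one]
  rw [hkey, trace_conj hu1]
  have hdiag : ∀ i : Fin n, (Matrix.diagonal d * ((uᴴ * v) * Matrix.diagonal e * (uᴴ * v)ᴴ)) i i
      = ∑ j, d i * e j * ((uᴴ * v) i j * star ((uᴴ * v) i j)) := by
    intro i
    rw [Matrix.diagonal_mul, Matrix.mul_apply, Finset.mul_sum]
    refine Finset.sum_congr rfl fun j _ => ?_
    rw [Matrix.mul_diagonal, Matrix.conjTranspose_apply]
    ring
  rw [Matrix.trace]
  exact Finset.sum_congr rfl fun i _ => hdiag i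

/-- Unfold `mfun` on a Hermitian matrix. -/
lemma mfun_eq {n : ℕ} {A : Matrix (Fin n) (Fin n) ℂ} (hA : A.IsHermitian) (f : ℝ → ℝ) :
    mfun f A = (hA.eigenvectorUnitary : Matrix (Fin n) (Fin n) ℂ) *
      Matrix.diagonal (fun i => (f (hA.eigenvalues i) : ℂ)) *
      (hA.eigenvectorUnitary : Matrix (Fin n) (Fin n) ℂ)ᴴ := by
  unfold mfun
  rw [dif_pos hA]

/-- Spectral decomposition in the form used here. -/
lemma herm_dec {n : ℕ} {A : Matrix (Fin n) (Fin n) ℂ} (hA : A.IsHermitian) :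
    A = (hA.eigenvectorUnitary : Matrix (Fin n) (Fin n) ℂ) *
      Matrix.diagonal (fun i => ((hA.eigenvalues i : ℝ) : ℂ)) *
      (hA.eigenvectorUnitary : Matrix (Fin n) (Fin n) ℂ)ᴴ := by
  conv_lhs => rw [hA.spectral_theorem]
  rfl

end Helpers

/-- Variational expression for the trace, `q ≤ 2`:  for positive definite `Y`,
`Tr Y = max_{X > 0} { Tr X - Tr( X^(2-q) (log_q X - log_q Y) ) }`; i.e. for every
positive definite `X` the expression is `≤ Tr Y` (as complex numbers in the complex
order, so both sides are real), with equality when `X = Y`. -/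
theorem trace_eq_max_of_le_two {n : ℕ} (q : ℝ) (hq : q ≤ 2)
    (Y : Matrix (Fin n) (Fin n) ℂ) (hY : Y.PosDef) :
    (∀ X : Matrix (Fin n) (Fin n) ℂ, X.PosDef →
        X.trace - (mpow X (2 - q) * (mlog q X - mlog q Y)).trace ≤ Y.trace) ∧
      Y.trace - (mpow Y (2 - q) * (mlog q Y - mlog q Y)).trace = Y.trace := by
  constructor
  · intro X hX
    have hXh : X.IsHermitian := hX.1
    have hYh : Y.IsHermitian := hY.1
    have ha : ∀ i, 0 < hXh.eigenvalues i := hX.eigenvalues_pos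
    have hb : ∀ j, 0 < hYh.eigenvalues j := hY.eigenvalues_pos
    set u : Matrix (Fin n) (Fin n) ℂ := (hXh.eigenvectorUnitary : Matrix (Fin n) (Fin n) ℂ)
      with hudef
    set v : Matrix (Fin n) (Fin n) ℂ := (hYh.eigenvectorUnitary : Matrix (Fin n) (Fin n) ℂ)
      with hvdef
    have hu2 : u * uᴴ = 1 := by
      have := Matrix.mem_unitaryGroup_iff.mp hXh.eigenvectorUnitary.2
      rw [Matrix.star_eq_conjTranspose] at this
      exact this
    have hu1 : uᴴ * u = 1 := by
      have := Matrix.mem_unitaryGroup_iff'.mp hXh.eigenvectorUnitary.2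
      rw [Matrix.star_eq_conjTranspose] at this
      exact this
    have hv2 : v * vᴴ = 1 := by
      have := Matrix.mem_unitaryGroup_iff.mp hYh.eigenvectorUnitary.2
      rw [Matrix.star_eq_conjTranspose] at this
      exact this
    have hv1 : vᴴ * v = 1 := by
      have := Matrix.mem_unitaryGroup_iff'.mp hYh.eigenvectorUnitary.2
      rw [Matrix.star_eq_conjTranspose] at this
      exact this
    -- notation
    set av : Fin n → ℝ := hXh.eigenvalues with havdef
    set bv : Fin n → ℝ := hYh.eigenvalues with hbvdef
    set w : Fin n → Fin n → ℝ := fun i j => Complex.normSq ((uᴴ * v) i j) with hwdef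
    -- unitary relations of W = uᴴ * v
    have hW2 : (uᴴ * v) * (uᴴ * v)ᴴ = 1 := by
      rw [Matrix.conjTranspose_mul, Matrix.conjTranspose_conjTranspose]
      calc uᴴ * v * (vᴴ * u) = uᴴ * (v * vᴴ) * u := by
            simp only [Matrix.mul_assoc]
        _ = 1 := by rw [hv2, Matrix.mul_one, hu1]
    have hW1 : (uᴴ * v)ᴴ * (uᴴ * v) = 1 := by
      rw [Matrix.conjTranspose_mul, Matrix.conjTranspose_conjTranspose]
      calc vᴴ * u * (uᴴ * v) = vᴴ * (u * uᴴ) * v := by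
            simp only [Matrix.mul_assoc]
        _ = 1 := by rw [hu2, Matrix.mul_one, hv1]
    have hconj : ∀ z : ℂ, z * star z = ((Complex.normSq z : ℝ) : ℂ) := fun z =>
      Complex.mul_conj z
    have hconj' : ∀ z : ℂ, star z * z = ((Complex.normSq z : ℝ) : ℂ) := fun z => by
      rw [mul_comm]; exact Complex.mul_conj z
    have row : ∀ i, ∑ j, w i j = 1 := by
      intro i
      have h := congrFun (congrFun hW2 i) i
      rw [Matrix.mul_apply] at h
      simp only [Matrix.conjTranspose_apply, hconj, Matrix.one_apply_eq] at h
      exact_mod_cast h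
    have col : ∀ j, ∑ i, w i j = 1 := by
      intro j
      have h := congrFun (congrFun hW1 j) j
      rw [Matrix.mul_apply] at h
      simp only [Matrix.conjTranspose_apply, hconj', Matrix.one_apply_eq] at h
      exact_mod_cast h
    -- trace computations
    have eX : X.trace = ((∑ i, av i : ℝ) : ℂ) := by
      conv_lhs => rw [herm_dec hXh]
      rw [trace_conj hu1, Matrix.trace_diagonal]
      push_cast
      rfl
    have eY : Y.trace = ((∑ j, bv j : ℝ) : ℂ) := by
      conv_lhs => rw [herm_dec hYh]
      rw [trace_conj hv1, Matrix.trace_diagonal]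
      push_cast
      rfl
    have e1 : (mpow X (2 - q) * mlog q X).trace
        = ((∑ i, av i ^ (2 - q) * dlog q (av i) : ℝ) : ℂ) := by
      rw [show mpow X (2 - q) = mfun (fun t => t ^ (2 - q)) X from rfl,
        show mlog q X = mfun (dlog q) X from rfl, mfun_eq hXh, mfun_eq hXh,
        trace_conj_mul_conj_same hu1]
      push_cast
      rfl
    have e2 : (mpow X (2 - q) * mlog q Y).trace
        = ((∑ i, ∑ j, av i ^ (2 - q) * dlog q (bv j) * w i j : ℝ) : ℂ) := by
      rw [show mpow X (2 - q) = mfun (fun t => t ^ (2 - q)) X from rfl,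
        show mlog q Y = mfun (dlog q) Y from rfl, mfun_eq hXh, mfun_eq hYh,
        trace_conj_mul_conj hu2 hu1]
      simp only [hconj]
      push_cast
      rfl
    -- the real inequality
    have key : ∀ i j, w i j * av i - w i j * (av i ^ (2 - q) * dlog q (av i))
        + w i j * (av i ^ (2 - q) * dlog q (bv j)) ≤ w i j * bv j := by
      intro i j
      have hs := scalar_key q hq (ha i) (hb j)
      have hw : 0 ≤ w i j := Complex.normSq_nonneg _
      nlinarith [mul_le_mul_of_nonneg_left hs hw]
    have hrow1 : ∑ i, av i = ∑ i, ∑ j, w i j * av i := by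
      refine Finset.sum_congr rfl fun i _ => ?_
      rw [← Finset.sum_mul, row i, one_mul]
    have hrow2 : ∑ i, av i ^ (2 - q) * dlog q (av i)
        = ∑ i, ∑ j, w i j * (av i ^ (2 - q) * dlog q (av i)) := by
      refine Finset.sum_congr rfl fun i _ => ?_
      rw [← Finset.sum_mul, row i, one_mul]
    have hrow3 : ∑ i, ∑ j, av i ^ (2 - q) * dlog q (bv j) * w i j
        = ∑ i, ∑ j, w i j * (av i ^ (2 - q) * dlog q (bv j)) := by
      exact Finset.sum_congr rfl fun i _ => Finset.sum_congr rfl fun j _ => by ring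
    have hcolb : ∑ j, bv j = ∑ i, ∑ j, w i j * bv j := by
      have hj : ∀ j, ∑ i, w i j * bv j = bv j := fun j => by
        rw [← Finset.sum_mul, col j, one_mul]
      calc ∑ j, bv j = ∑ j, ∑ i, w i j * bv j :=
            (Finset.sum_congr rfl fun j _ => (hj j).symm)
        _ = ∑ i, ∑ j, w i j * bv j := Finset.sum_comm
    have main : (∑ i, av i) - ((∑ i, av i ^ (2 - q) * dlog q (av i))
        - ∑ i, ∑ j, av i ^ (2 - q) * dlog q (bv j) * w i j) ≤ ∑ j, bv j := by
      have expand : (∑ i, av i) - ((∑ i, av i ^ (2 - q) * dlog q (av i))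
          - ∑ i, ∑ j, av i ^ (2 - q) * dlog q (bv j) * w i j)
          = ∑ i, ∑ j, (w i j * av i - w i j * (av i ^ (2 - q) * dlog q (av i))
              + w i j * (av i ^ (2 - q) * dlog q (bv j))) := by
        rw [hrow1, hrow2, hrow3]
        simp only [Finset.sum_add_distrib, Finset.sum_sub_distrib]
        ring
      rw [expand, hcolb]
      exact Finset.sum_le_sum fun i _ => Finset.sum_le_sum fun j _ => key i j
    -- conclude over ℂ
    rw [Matrix.mul_sub, Matrix.trace_sub, eX, e1, e2, eY,
      ← Complex.ofReal_sub, ← Complex.ofReal_sub]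
    exact Complex.real_le_real.mpr main
  · simp
end

section
/- For all positive definite n×n complex matrices X and Y, the quantum relative entropy satisfies S(X | Y) = Tr( X (log X − log Y) ) ≥ Tr(X) − Tr(Y). -/
open Matrix ComplexOrder

section Aux

variable {n : ℕ}

lemma trace_mul_mfun (X Y : Matrix (Fin n) (Fin n) ℂ) (hX : X.IsHermitian)
    (hY : Y.IsHermitian) (f : ℝ → ℝ) :
    (X * mfun f Y).trace =
      ∑ j, ∑ i, ((hX.eigenvalues i : ℂ) *
        Complex.normSq ((star (hX.eigenvectorUnitary : Matrix (Fin n) (Fin n) ℂ) *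
          (hY.eigenvectorUnitary : Matrix (Fin n) (Fin n) ℂ)) i j) * (f (hY.eigenvalues j) : ℂ)) := by
  set U := (hX.eigenvectorUnitary : Matrix (Fin n) (Fin n) ℂ)
  set V := (hY.eigenvectorUnitary : Matrix (Fin n) (Fin n) ℂ)
  set W := star U * V with hW
  have hXeq : X = U * Matrix.diagonal (RCLike.ofReal ∘ hX.eigenvalues) * star U :=
    hX.spectral_theorem
  have hmf : mfun f Y = V * Matrix.diagonal (fun i => (f (hY.eigenvalues i) : ℂ)) * star V := by
    rw [mfun, dif_pos hY]; rfl
  have key : X * mfun f Y =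
      U * (Matrix.diagonal (RCLike.ofReal ∘ hX.eigenvalues) * W *
        Matrix.diagonal (fun i => (f (hY.eigenvalues i) : ℂ))) * star V := by
    conv_lhs => rw [hXeq, hmf]
    rw [hW]; simp only [Matrix.mul_assoc]
  rw [key, Matrix.trace_mul_cycle, ← Matrix.mul_assoc]
  have hsVU : star V * U = star W := by rw [hW]; simp [Matrix.star_mul, star_star]
  rw [hsVU]
  rw [Matrix.trace]
  congr 1; ext j
  rw [Matrix.diag_apply, Matrix.mul_diagonal, Matrix.mul_apply, Finset.sum_mul]
  congr 1; ext i
  rw [Matrix.star_apply, Matrix.diagonal_mul, Complex.star_def, ← Complex.mul_conj]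
  simp only [Function.comp_apply]
  have hcast : (RCLike.ofReal (hX.eigenvalues i) : ℂ) = (hX.eigenvalues i : ℂ) := rfl
  rw [hcast]
  ring

lemma trace_eq_sum_eigen (X : Matrix (Fin n) (Fin n) ℂ) (hX : X.IsHermitian) :
    X.trace = ∑ i, (hX.eigenvalues i : ℂ) := by
  have hXeq : X = (hX.eigenvectorUnitary : Matrix (Fin n) (Fin n) ℂ) *
      Matrix.diagonal (RCLike.ofReal ∘ hX.eigenvalues) * star (hX.eigenvectorUnitary : Matrix (Fin n) (Fin n) ℂ) :=
    hX.spectral_theorem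
  conv_lhs => rw [hXeq]
  rw [Matrix.trace_mul_cycle,
    Matrix.mem_unitaryGroup_iff'.mp hX.eigenvectorUnitary.2, Matrix.one_mul,
    Matrix.trace_diagonal]
  rfl

lemma row_sum_normSq (W : Matrix (Fin n) (Fin n) ℂ) (hW : W ∈ Matrix.unitaryGroup (Fin n) ℂ)
    (i : Fin n) : ∑ j, Complex.normSq (W i j) = 1 := by
  have h : (W * star W) i i = 1 := by
    rw [Matrix.mem_unitaryGroup_iff.mp hW]; simp
  rw [Matrix.mul_apply] at h
  have h2 : (((∑ j, Complex.normSq (W i j) : ℝ)) : ℂ) = 1 := by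
    push_cast
    rw [← h]
    congr 1; ext j
    rw [Matrix.star_apply, Complex.star_def, Complex.mul_conj]
  exact_mod_cast h2

lemma col_sum_normSq (W : Matrix (Fin n) (Fin n) ℂ) (hW : W ∈ Matrix.unitaryGroup (Fin n) ℂ)
    (j : Fin n) : ∑ i, Complex.normSq (W i j) = 1 := by
  have h : (star W * W) j j = 1 := by
    rw [Matrix.mem_unitaryGroup_iff'.mp hW]; simp
  rw [Matrix.mul_apply] at h
  have h2 : (((∑ i, Complex.normSq (W i j) : ℝ)) : ℂ) = 1 := by
    push_cast
    rw [← h]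
    congr 1; ext i
    rw [Matrix.star_apply, Complex.star_def, mul_comm, Complex.mul_conj]
  exact_mod_cast h2

lemma klein_scalar {d e : ℝ} (hd : 0 < d) (he : 0 < e) :
    d - e ≤ d * Real.log d - d * Real.log e := by
  have h := Real.log_le_sub_one_of_pos (div_pos he hd)
  rw [Real.log_div he.ne' hd.ne'] at h
  have h2 : e / d - 1 = (e - d) / d := by field_simp
  rw [h2, le_div_iff₀ hd] at h
  nlinarith

end Aux

/-- The quantum relative entropy `S(X∣Y) = Tr( X (log X - log Y) )` of positive
definite matrices satisfies `S(X∣Y) ≥ Tr X - Tr Y` (an inequality of complex numbers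
in the complex order, so both sides are real). -/
theorem relativeEntropy_ge_trace_sub {n : ℕ} (X Y : Matrix (Fin n) (Fin n) ℂ)
    (hX : X.PosDef) (hY : Y.PosDef) :
    X.trace - Y.trace ≤ (X * (mfun Real.log X - mfun Real.log Y)).trace := by
  set d := hX.1.eigenvalues with hd
  set e := hY.1.eigenvalues with he
  set U := (hX.1.eigenvectorUnitary : Matrix (Fin n) (Fin n) ℂ) with hU
  set V := (hY.1.eigenvectorUnitary : Matrix (Fin n) (Fin n) ℂ) with hV
  set W := star U * V with hW
  set p : Fin n → Fin n → ℝ := fun i j => Complex.normSq (W i j) with hp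
  have hWu : W ∈ Matrix.unitaryGroup (Fin n) ℂ := by
    rw [hW, hU, hV]
    exact Submonoid.mul_mem _ (Unitary.star_mem hX.1.eigenvectorUnitary.2)
      hY.1.eigenvectorUnitary.2
  -- trace identities
  have h1 : X.trace = ((∑ i, d i : ℝ) : ℂ) := by
    rw [trace_eq_sum_eigen X hX.1]; push_cast; rfl
  have h2 : Y.trace = ((∑ j, e j : ℝ) : ℂ) := by
    rw [trace_eq_sum_eigen Y hY.1]; push_cast; rfl
  have h4 : (X * mfun Real.log Y).trace =
      ((∑ j, ∑ i, d i * p i j * Real.log (e j) : ℝ) : ℂ) := by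
    rw [trace_mul_mfun X Y hX.1 hY.1]; push_cast; rfl
  have h3 : (X * mfun Real.log X).trace = ((∑ i, d i * Real.log (d i) : ℝ) : ℂ) := by
    rw [trace_mul_mfun X X hX.1 hX.1]
    have hUU : star U * U = 1 := Matrix.mem_unitaryGroup_iff'.mp hX.1.eigenvectorUnitary.2
    rw [← hU, hUU]
    push_cast
    rw [Finset.sum_comm]
    congr 1; ext i
    rw [Finset.sum_eq_single i]
    · simp [Matrix.one_apply]; rfl
    · intro j _ hij
      rw [Matrix.one_apply_ne (Ne.symm hij)]
      simp
    · simp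
  rw [Matrix.mul_sub, Matrix.trace_sub, h1, h2, h3, h4, ← Complex.ofReal_sub,
    ← Complex.ofReal_sub, Complex.real_le_real]
  -- real inequality
  have hdp : ∀ i, 0 < d i := fun i => hX.eigenvalues_pos i
  have hep : ∀ j, 0 < e j := fun j => hY.eigenvalues_pos j
  have hrow : ∀ i, ∑ j, p i j = 1 := row_sum_normSq W hWu
  have hcol : ∀ j, ∑ i, p i j = 1 := col_sum_normSq W hWu
  have hL : ∑ j, ∑ i, p i j * (d i - e j) = (∑ i, d i) - (∑ j, e j) := by
    simp only [mul_sub, Finset.sum_sub_distrib]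
    congr 1
    · rw [Finset.sum_comm]; congr 1; ext i; rw [← Finset.sum_mul, hrow i, one_mul]
    · congr 1; ext j; rw [← Finset.sum_mul, hcol j, one_mul]
  have hR : ∑ j, ∑ i, p i j * (d i * Real.log (d i) - d i * Real.log (e j)) =
      (∑ i, d i * Real.log (d i)) - ∑ j, ∑ i, d i * p i j * Real.log (e j) := by
    simp only [mul_sub, Finset.sum_sub_distrib]
    congr 1
    · rw [Finset.sum_comm]; congr 1; ext i; rw [← Finset.sum_mul, hrow i, one_mul]
    · congr 1; ext j; congr 1; ext i; ring
  rw [← hL, ← hR]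
  apply Finset.sum_le_sum
  intro j _
  apply Finset.sum_le_sum
  intro i _
  exact mul_le_mul_of_nonneg_left (klein_scalar (hdp i) (hep j)) (Complex.normSq_nonneg _)
end

section
/- Fix a real exponent p and a real exponent s > 0. The following are equivalent: (i) for every dimension n, every n×n complex matrix H and every positive semidefinite n×n matrix L, the function A ↦ Tr( (L + H* A^p H)^s ) is convex on the set of positive definite n×n complex matrices; (ii) for every dimension n and every n×n complex matrix H, the function A ↦ Tr( (H* A^p H)^s ) is convex on the set of positive definite n×n complex matrices. -/
open Matrix ComplexOrder

lemma mfun_unique {n : ℕ} (f : ℝ → ℝ) {A U : Matrix (Fin n) (Fin n) ℂ}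
    (hU : U ∈ Matrix.unitaryGroup (Fin n) ℂ) (d : Fin n → ℝ)
    (h : A = U * Matrix.diagonal (fun i => (d i : ℂ)) * Uᴴ) :
    mfun f A = U * Matrix.diagonal (fun i => (f (d i) : ℂ)) * Uᴴ := by
  have hdiag : ∀ (g : ℝ → ℝ), (Matrix.diagonal (fun i => (g (d i) : ℂ))).IsHermitian := by
    intro g
    exact Matrix.isHermitian_diagonal_of_self_adjoint _
      (funext fun i => by simp [Pi.star_apply, RCLike.star_def, Complex.conj_ofReal])
  have hA : A.IsHermitian := by
    rw [h]
    exact Matrix.isHermitian_mul_mul_conjTranspose U (hdiag id)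
  have hUU : U * Uᴴ = 1 := by
    have := (Matrix.mem_unitaryGroup_iff).mp hU
    rwa [Matrix.star_eq_conjTranspose] at this
  have hUU' : Uᴴ * U = 1 := by
    have := (Matrix.mem_unitaryGroup_iff').mp hU
    rwa [Matrix.star_eq_conjTranspose] at this
  set V : Matrix (Fin n) (Fin n) ℂ := (hA.eigenvectorUnitary : Matrix (Fin n) (Fin n) ℂ) with hV
  have hVmem : V ∈ Matrix.unitaryGroup (Fin n) ℂ := hA.eigenvectorUnitary.2
  have hVV : V * Vᴴ = 1 := by
    have := (Matrix.mem_unitaryGroup_iff).mp hVmem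
    rwa [Matrix.star_eq_conjTranspose] at this
  have hVV' : Vᴴ * V = 1 := by
    have := (Matrix.mem_unitaryGroup_iff').mp hVmem
    rwa [Matrix.star_eq_conjTranspose] at this
  have hspec : A = V * Matrix.diagonal (fun i => (hA.eigenvalues i : ℂ)) * Vᴴ := by
    have := hA.spectral_theorem
    rwa [Unitary.conjStarAlgAut_apply, Matrix.star_eq_conjTranspose] at this
  set W := Vᴴ * U with hW
  have hcomm : Matrix.diagonal (fun i => (hA.eigenvalues i : ℂ)) * W
      = W * Matrix.diagonal (fun i => (d i : ℂ)) := by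
    have heq : V * Matrix.diagonal (fun i => (hA.eigenvalues i : ℂ)) * Vᴴ
        = U * Matrix.diagonal (fun i => (d i : ℂ)) * Uᴴ := by rw [← hspec, ← h]
    calc Matrix.diagonal (fun i => (hA.eigenvalues i : ℂ)) * W
        = Vᴴ * (V * Matrix.diagonal (fun i => (hA.eigenvalues i : ℂ)) * Vᴴ) * U := by
          simp only [hW, Matrix.mul_assoc, ← Matrix.mul_assoc Vᴴ V, hVV', Matrix.one_mul]
      _ = Vᴴ * (U * Matrix.diagonal (fun i => (d i : ℂ)) * Uᴴ) * U := by rw [heq]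
      _ = W * Matrix.diagonal (fun i => (d i : ℂ)) := by
          simp only [hW, Matrix.mul_assoc, ← Matrix.mul_assoc Uᴴ U, hUU', Matrix.mul_one]
  have key : ∀ i j, (f (hA.eigenvalues i) : ℂ) * W i j = W i j * (f (d j) : ℂ) := by
    intro i j
    have h1 : (hA.eigenvalues i : ℂ) * W i j = W i j * (d j : ℂ) := by
      have := congrArg (fun M => M i j) hcomm
      simpa [Matrix.diagonal_mul, Matrix.mul_diagonal] using this
    by_cases hWij : W i j = 0
    · simp [hWij]
    · have h2 : (hA.eigenvalues i : ℂ) = (d j : ℂ) := by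
        rw [mul_comm (W i j) _] at h1
        exact mul_right_cancel₀ hWij h1
      have h3 : hA.eigenvalues i = d j := by exact_mod_cast h2
      rw [h3, mul_comm]
  have hcommf : Matrix.diagonal (fun i => (f (hA.eigenvalues i) : ℂ)) * W
      = W * Matrix.diagonal (fun i => (f (d i) : ℂ)) := by
    ext i j
    simp [Matrix.diagonal_mul, Matrix.mul_diagonal, key i j]
  have : mfun f A = V * Matrix.diagonal (fun i => (f (hA.eigenvalues i) : ℂ)) * Vᴴ := by
    rw [mfun, dif_pos hA]
  rw [this]
  calc V * Matrix.diagonal (fun i => (f (hA.eigenvalues i) : ℂ)) * Vᴴ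
      = V * (Matrix.diagonal (fun i => (f (hA.eigenvalues i) : ℂ)) * W) * Uᴴ := by
        simp only [hW, Matrix.mul_assoc, ← Matrix.mul_assoc U Uᴴ, hUU]
        simp [Matrix.mul_assoc]
    _ = V * (W * Matrix.diagonal (fun i => (f (d i) : ℂ))) * Uᴴ := by rw [hcommf]
    _ = U * Matrix.diagonal (fun i => (f (d i) : ℂ)) * Uᴴ := by
        simp only [hW, ← Matrix.mul_assoc, hVV, Matrix.one_mul]

lemma mfun_isHermitian {n : ℕ} (f : ℝ → ℝ) (A : Matrix (Fin n) (Fin n) ℂ) :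
    (mfun f A).IsHermitian := by
  unfold mfun
  split
  · exact Matrix.isHermitian_mul_mul_conjTranspose _
      (Matrix.isHermitian_diagonal_of_self_adjoint _
        (funext fun i => by simp [Pi.star_apply, RCLike.star_def, Complex.conj_ofReal]))
  · exact Matrix.isHermitian_zero

lemma mfun_one {n : ℕ} (f : ℝ → ℝ) (hf : f 1 = 1) :
    mfun f (1 : Matrix (Fin n) (Fin n) ℂ) = 1 := by
  have := mfun_unique f (A := (1 : Matrix (Fin n) (Fin n) ℂ)) (U := 1)
    (Submonoid.one_mem _) (fun _ => (1 : ℝ)) (by simp)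
  simpa [hf] using this

lemma mfun_zero {n : ℕ} (f : ℝ → ℝ) (hf : f 0 = 0) :
    mfun f (0 : Matrix (Fin n) (Fin n) ℂ) = 0 := by
  have := mfun_unique f (A := (0 : Matrix (Fin n) (Fin n) ℂ)) (U := 1)
    (Submonoid.one_mem _) (fun _ => (0 : ℝ)) (by simp)
  simpa [hf] using this

lemma mfun_block {n : ℕ} (f : ℝ → ℝ) {A B : Matrix (Fin n) (Fin n) ℂ}
    (hA : A.IsHermitian) (hB : B.IsHermitian) :
    mfun f ((Matrix.fromBlocks A 0 0 B).submatrix finSumFinEquiv.symm finSumFinEquiv.symm)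
      = (Matrix.fromBlocks (mfun f A) 0 0 (mfun f B)).submatrix
          finSumFinEquiv.symm finSumFinEquiv.symm := by
  set e := (finSumFinEquiv (m := n) (n := n))
  set UA : Matrix (Fin n) (Fin n) ℂ := (hA.eigenvectorUnitary : Matrix (Fin n) (Fin n) ℂ)
  set UB : Matrix (Fin n) (Fin n) ℂ := (hB.eigenvectorUnitary : Matrix (Fin n) (Fin n) ℂ)
  set U : Matrix (Fin (n + n)) (Fin (n + n)) ℂ :=
    (Matrix.fromBlocks UA 0 0 UB).submatrix e.symm e.symm with hU
  have hUAmem := (Matrix.mem_unitaryGroup_iff).mp hA.eigenvectorUnitary.2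
  have hUBmem := (Matrix.mem_unitaryGroup_iff).mp hB.eigenvectorUnitary.2
  rw [Matrix.star_eq_conjTranspose] at hUAmem hUBmem
  have hUmem : U ∈ Matrix.unitaryGroup (Fin (n + n)) ℂ := by
    rw [Matrix.mem_unitaryGroup_iff, Matrix.star_eq_conjTranspose, hU,
      Matrix.conjTranspose_submatrix, Matrix.fromBlocks_conjTranspose,
      Matrix.submatrix_mul_equiv, Matrix.fromBlocks_multiply]
    simp only [Matrix.mul_zero, Matrix.zero_mul, add_zero, zero_add,
      Matrix.conjTranspose_zero, hUAmem, hUBmem, Matrix.fromBlocks_one]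
    rw [show UA * UAᴴ = 1 from hUAmem, show UB * UBᴴ = 1 from hUBmem, Matrix.fromBlocks_one]
    exact Matrix.submatrix_one_equiv (α := ℂ) e.symm
  set d : Fin (n + n) → ℝ := fun i => Sum.elim hA.eigenvalues hB.eigenvalues (e.symm i) with hd
  have hdiag : ∀ (g : ℝ → ℝ), Matrix.diagonal (fun i => (g (d i) : ℂ))
      = (Matrix.fromBlocks (Matrix.diagonal (fun i => (g (hA.eigenvalues i) : ℂ))) 0 0
          (Matrix.diagonal (fun i => (g (hB.eigenvalues i) : ℂ)))).submatrix e.symm e.symm := by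
    intro g
    rw [Matrix.fromBlocks_diagonal, Matrix.submatrix_diagonal_equiv]
    have : (fun i => (g (d i) : ℂ))
        = (Sum.elim (fun i => (g (hA.eigenvalues i) : ℂ))
            (fun i => (g (hB.eigenvalues i) : ℂ))) ∘ e.symm := by
      funext i
      rcases h : e.symm i with a | b <;> simp [hd, h]
    rw [this]
  have hspecA : A = UA * Matrix.diagonal (fun i => ((hA.eigenvalues i : ℝ) : ℂ)) * UAᴴ := by
    have := hA.spectral_theorem
    rwa [Unitary.conjStarAlgAut_apply, Matrix.star_eq_conjTranspose] at this
  have hspecB : B = UB * Matrix.diagonal (fun i => ((hB.eigenvalues i : ℝ) : ℂ)) * UBᴴ := by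
    have := hB.spectral_theorem
    rwa [Unitary.conjStarAlgAut_apply, Matrix.star_eq_conjTranspose] at this
  have hdiag0 : Matrix.diagonal (fun i => (d i : ℂ))
      = (Matrix.fromBlocks (Matrix.diagonal (fun i => ((hA.eigenvalues i : ℝ) : ℂ))) 0 0
          (Matrix.diagonal (fun i => ((hB.eigenvalues i : ℝ) : ℂ)))).submatrix e.symm e.symm := by
    simpa using hdiag (fun t => t)
  have hdecomp : (Matrix.fromBlocks A 0 0 B).submatrix e.symm e.symm
      = U * Matrix.diagonal (fun i => (d i : ℂ)) * Uᴴ := by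
    rw [hdiag0, hU, Matrix.conjTranspose_submatrix, Matrix.fromBlocks_conjTranspose,
      Matrix.submatrix_mul_equiv, Matrix.submatrix_mul_equiv, Matrix.fromBlocks_multiply,
      Matrix.fromBlocks_multiply]
    simp only [Matrix.mul_zero, Matrix.zero_mul, add_zero, zero_add,
      Matrix.conjTranspose_zero]
    rw [← hspecA, ← hspecB]
  rw [mfun_unique f hUmem d hdecomp, hdiag f, hU, Matrix.conjTranspose_submatrix,
    Matrix.fromBlocks_conjTranspose, Matrix.submatrix_mul_equiv, Matrix.submatrix_mul_equiv,
    Matrix.fromBlocks_multiply, Matrix.fromBlocks_multiply]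
  have hmA : mfun f A = UA * Matrix.diagonal (fun i => (f (hA.eigenvalues i) : ℂ)) * UAᴴ := by
    rw [mfun, dif_pos hA]
  have hmB : mfun f B = UB * Matrix.diagonal (fun i => (f (hB.eigenvalues i) : ℂ)) * UBᴴ := by
    rw [mfun, dif_pos hB]
  simp only [Matrix.mul_zero, Matrix.zero_mul, add_zero, zero_add, Matrix.conjTranspose_zero]
  rw [hmA, hmB]

lemma trace_submatrix_equiv {m l : Type*} [Fintype m] [Fintype l]
    (M : Matrix m m ℂ) (e : l ≃ m) : (M.submatrix e e).trace = M.trace := by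
  simp only [Matrix.trace, Matrix.diag, Matrix.submatrix_apply]
  exact Equiv.sum_comp e (fun i => M i i)

lemma trace_fromBlocks {m l : Type*} [Fintype m] [Fintype l]
    (A : Matrix m m ℂ) (B : Matrix m l ℂ) (C : Matrix l m ℂ) (D : Matrix l l ℂ) :
    (Matrix.fromBlocks A B C D).trace = A.trace + D.trace := by
  simp [Matrix.trace, Matrix.diag, Fintype.sum_sum_type]

lemma posDef_smul {n : ℕ} {A : Matrix (Fin n) (Fin n) ℂ} {a : ℝ} (ha : 0 < a)
    (hA : A.PosDef) : (a • A).PosDef := by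
  have hsm : a • A = (a : ℂ) • A := by
    ext i j; simp [Complex.real_smul]
  rw [hsm]
  refine Matrix.PosDef.of_dotProduct_mulVec_pos ?_ (fun x hx => ?_)
  · rw [Matrix.IsHermitian, Matrix.conjTranspose_smul, hA.1.eq, Complex.star_def,
      Complex.conj_ofReal]
  · rw [Matrix.smul_mulVec, dotProduct_smul]
    have h1 := hA.dotProduct_mulVec_pos hx
    rw [Complex.lt_def] at h1 ⊢
    constructor
    · simpa using mul_pos ha h1.1
    · simp [← h1.2]

lemma convex_posDef_set (n : ℕ) : Convex ℝ {A : Matrix (Fin n) (Fin n) ℂ | A.PosDef} := by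
  intro A hA B hB a b ha hb hab
  rcases ha.eq_or_lt with h0 | hpos
  · have hb1 : b = 1 := by linarith
    simpa [← h0, hb1] using hB
  rcases hb.eq_or_lt with h0 | hposb
  · have ha1 : a = 1 := by linarith
    simpa [← h0, ha1] using hA
  exact (posDef_smul hpos hA).add_posSemidef (posDef_smul hposb hB).posSemidef

lemma posDef_fromBlocks_one {n : ℕ} {A : Matrix (Fin n) (Fin n) ℂ} (hA : A.PosDef) :
    (Matrix.fromBlocks A 0 0 (1 : Matrix (Fin n) (Fin n) ℂ)).PosDef := by
  refine Matrix.PosDef.of_dotProduct_mulVec_pos ?_ (fun x hx => ?_)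
  · rw [Matrix.IsHermitian, Matrix.fromBlocks_conjTranspose]
    simp [hA.1.eq]
  · have hx' : x = Sum.elim (x ∘ Sum.inl) (x ∘ Sum.inr) := by
      funext i; rcases i with i | i <;> rfl
    rw [hx', Matrix.fromBlocks_mulVec, Function.star_sumElim,
      sumElim_dotProduct_sumElim]
    simp only [Matrix.zero_mulVec, add_zero, zero_add, Matrix.one_mulVec]
    by_cases h1 : x ∘ Sum.inl = 0
    · have h2 : x ∘ Sum.inr ≠ 0 := by
        intro h2
        apply hx
        funext i; rcases i with i | i
        · exact congrFun h1 i
        · exact congrFun h2 i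
      rw [h1]
      simp only [star_zero, zero_dotProduct, zero_add]
      exact Matrix.dotProduct_star_self_pos_iff.mpr h2
    · exact add_pos_of_pos_of_nonneg (hA.dotProduct_mulVec_pos h1) (dotProduct_star_self_nonneg _)

lemma posDef_submatrix_equiv {m l : Type*} [Fintype m] [Fintype l] [DecidableEq m] [DecidableEq l]
    {M : Matrix m m ℂ} (hM : M.PosDef) (e : l ≃ m) : (M.submatrix e e).PosDef := by
  refine Matrix.PosDef.of_dotProduct_mulVec_pos ?_ (fun x hx => ?_)
  · rw [Matrix.IsHermitian, Matrix.conjTranspose_submatrix, hM.1.eq]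
  · rw [Matrix.submatrix_mulVec_equiv]
    have : star x ⬝ᵥ ((M *ᵥ (x ∘ e.symm)) ∘ e)
        = star (x ∘ e.symm) ⬝ᵥ (M *ᵥ (x ∘ e.symm)) := by
      simp only [dotProduct]
      rw [← Equiv.sum_comp e.symm]
      simp
    rw [this]
    refine hM.dotProduct_mulVec_pos fun h => hx ?_
    funext i
    simpa using congrFun h (e i)

lemma trace_key {n : ℕ} (p s : ℝ) (hs : s ≠ 0) (H K : Matrix (Fin n) (Fin n) ℂ)
    (hK : K.IsHermitian) {A : Matrix (Fin n) (Fin n) ℂ} (hA : A.IsHermitian) :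
    (mpow ((((Matrix.fromBlocks H 0 K 0).submatrix finSumFinEquiv.symm finSumFinEquiv.symm))ᴴ *
        mpow ((Matrix.fromBlocks A 0 0 1).submatrix finSumFinEquiv.symm finSumFinEquiv.symm) p *
        ((Matrix.fromBlocks H 0 K 0).submatrix finSumFinEquiv.symm finSumFinEquiv.symm)) s).trace
      = (mpow (Hᴴ * mpow A p * H + K * K) s).trace := by
  have h1 : mpow ((Matrix.fromBlocks A 0 0 (1 : Matrix (Fin n) (Fin n) ℂ)).submatrix
        finSumFinEquiv.symm finSumFinEquiv.symm) p
      = (Matrix.fromBlocks (mpow A p) 0 0 (1 : Matrix (Fin n) (Fin n) ℂ)).submatrix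
          finSumFinEquiv.symm finSumFinEquiv.symm := by
    rw [mpow, mfun_block _ hA Matrix.isHermitian_one, mfun_one _ (Real.one_rpow p)]
    rfl
  have hM : (Hᴴ * mpow A p * H + K * K).IsHermitian := by
    refine Matrix.IsHermitian.add
      (Matrix.isHermitian_conjTranspose_mul_mul H (mfun_isHermitian _ A)) ?_
    rw [Matrix.IsHermitian, Matrix.conjTranspose_mul, hK.eq]
  have h2 : ((Matrix.fromBlocks H (0 : Matrix (Fin n) (Fin n) ℂ) K
          (0 : Matrix (Fin n) (Fin n) ℂ)).submatrix finSumFinEquiv.symm finSumFinEquiv.symm)ᴴ *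
        ((Matrix.fromBlocks (mpow A p) 0 0 (1 : Matrix (Fin n) (Fin n) ℂ)).submatrix
          finSumFinEquiv.symm finSumFinEquiv.symm) *
        ((Matrix.fromBlocks H (0 : Matrix (Fin n) (Fin n) ℂ) K
          (0 : Matrix (Fin n) (Fin n) ℂ)).submatrix finSumFinEquiv.symm finSumFinEquiv.symm)
      = (Matrix.fromBlocks (Hᴴ * mpow A p * H + K * K) (0 : Matrix (Fin n) (Fin n) ℂ)
          (0 : Matrix (Fin n) (Fin n) ℂ) (0 : Matrix (Fin n) (Fin n) ℂ)).submatrix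
          finSumFinEquiv.symm finSumFinEquiv.symm := by
    rw [Matrix.conjTranspose_submatrix, Matrix.fromBlocks_conjTranspose,
      Matrix.submatrix_mul_equiv, Matrix.submatrix_mul_equiv, Matrix.fromBlocks_multiply,
      Matrix.fromBlocks_multiply]
    simp [hK.eq, Matrix.mul_assoc]
  rw [h1, h2, mpow, mfun_block _ hM Matrix.isHermitian_zero,
    mfun_zero (fun t => t ^ s) (by exact Real.zero_rpow hs), trace_submatrix_equiv, trace_fromBlocks,
    Matrix.trace_zero, add_zero]
  rfl

/-- For fixed exponents `p` and `s > 0`, the trace function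
`A ↦ Tr((L + Hᴴ A^p H)^s)` is convex on positive definite matrices for every
dimension, every `H` and every positive semidefinite `L`, if and only if this holds
with `L = 0`, i.e. `A ↦ Tr((Hᴴ A^p H)^s)` is convex for every dimension and `H`. -/
theorem convex_trace_shifted_iff (p s : ℝ) (hs : 0 < s) :
    (∀ (n : ℕ) (H L : Matrix (Fin n) (Fin n) ℂ), L.PosSemidef →
        ConvexOn ℝ {A : Matrix (Fin n) (Fin n) ℂ | A.PosDef}
          (fun A => (mpow (L + Hᴴ * mpow A p * H) s).trace.re)) ↔
      (∀ (n : ℕ) (H : Matrix (Fin n) (Fin n) ℂ),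
        ConvexOn ℝ {A : Matrix (Fin n) (Fin n) ℂ | A.PosDef}
          (fun A => (mpow (Hᴴ * mpow A p * H) s).trace.re)) := by
  constructor
  · intro h n H
    have := h n H 0 Matrix.PosSemidef.zero
    simpa only [zero_add] using this
  · intro h n H L hL
    obtain ⟨K, hK, hKK⟩ : ∃ K : Matrix (Fin n) (Fin n) ℂ, K.IsHermitian ∧ K * K = L := by
      open scoped MatrixOrder in
      exact ⟨CFC.sqrt L, (CFC.sqrt_nonneg L).posSemidef.isHermitian,
        CFC.sqrt_mul_sqrt_self L hL.nonneg⟩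
    set H' := (Matrix.fromBlocks H 0 K 0).submatrix finSumFinEquiv.symm finSumFinEquiv.symm
      with hH'
    have h2 := h (n + n) H'
    set T : Matrix (Fin n) (Fin n) ℂ → Matrix (Fin (n + n)) (Fin (n + n)) ℂ :=
      fun X => (Matrix.fromBlocks X 0 0 (1 : Matrix (Fin n) (Fin n) ℂ)).submatrix
        finSumFinEquiv.symm finSumFinEquiv.symm with hT
    have hval : ∀ (X : Matrix (Fin n) (Fin n) ℂ), X.IsHermitian →
        (mpow (H'ᴴ * mpow (T X) p * H') s).trace.re
          = (mpow (L + Hᴴ * mpow X p * H) s).trace.re := by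
      intro X hX
      rw [hT, hH', trace_key p s hs.ne' H K hK hX, add_comm L, ← hKK]
    refine ⟨convex_posDef_set n, ?_⟩
    intro A hA B hB a b ha hb hab
    have hTA : (T A).PosDef := posDef_submatrix_equiv (posDef_fromBlocks_one hA) _
    have hTB : (T B).PosDef := posDef_submatrix_equiv (posDef_fromBlocks_one hB) _
    have hAB : (a • A + b • B).PosDef := convex_posDef_set n hA hB ha hb hab
    have hcomb : T (a • A + b • B) = a • T A + b • T B := by
      have : Matrix.fromBlocks (a • A + b • B) 0 0 (1 : Matrix (Fin n) (Fin n) ℂ)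
          = a • Matrix.fromBlocks A 0 0 1 + b • Matrix.fromBlocks B 0 0 1 := by
        rw [Matrix.fromBlocks_smul, Matrix.fromBlocks_smul, Matrix.fromBlocks_add]
        simp only [smul_zero, add_zero]
        rw [← add_smul, hab, one_smul]
      rw [hT]
      simp only [this]
      ext i j
      simp
    have h3 := h2.2 hTA hTB ha hb hab
    simp only at h3
    rw [← hcomb] at h3
    calc (mpow (L + Hᴴ * mpow (a • A + b • B) p * H) s).trace.re
        = (mpow (H'ᴴ * mpow (T (a • A + b • B)) p * H') s).trace.re :=
          (hval _ hAB.isHermitian).symm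
      _ ≤ a * (mpow (H'ᴴ * mpow (T A) p * H') s).trace.re
            + b * (mpow (H'ᴴ * mpow (T B) p * H') s).trace.re := h3
      _ = a * (mpow (L + Hᴴ * mpow A p * H) s).trace.re
            + b * (mpow (L + Hᴴ * mpow B p * H) s).trace.re := by
          rw [hval _ hA.isHermitian, hval _ hB.isHermitian]
end
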